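/- Let g_N be a taming function with ν = 1. There exists a constant C_N ≥ 0, depending only on g_N, such that for every smooth ℤ³-periodic divergence-free vector field u : ℝ³ → ℝ³, ∫_{[0,1]³} ⟨Δu(x) − ((u·∇)u)(x) − g_N(|u(x)|²)u(x), u(x) − Δu(x)⟩ dx ≤ −(1/2)‖u‖_{H²}² − (1/2)∫_{[0,1]³} |u(x)|² |∇u(x)|² dx + C_N ∫_{[0,1]³} |∇u(x)|² dx + ‖u‖_{L²}². (This is the H¹-energy estimate ⟨F(u), u⟩_{H¹} ≤ −½‖u‖²_{H²} − ½‖|u|·|∇u|‖²_{L²} + C_N‖∇u‖²_{L²} + ‖u‖²_{L²}.) -/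

import Mathlib

open MeasureTheory

noncomputable section

/-- Vector fields on `ℝ³` with values in `ℝ³`. -/
abbrev V3 := Fin 3 → ℝ

/-- `ℤ³`-periodicity: `u (x + k) = u x` for every integer vector `k`. -/
def IsPeriodic (u : V3 → V3) : Prop :=
  ∀ (x : V3) (k : Fin 3 → ℤ), u (x + fun i => (k i : ℝ)) = u x

/-- The `i`-th partial derivative `∂ᵢ u` at `x`. -/
def pd (u : V3 → V3) (i : Fin 3) (x : V3) : V3 :=
  fderiv ℝ u x (Pi.single i 1)

/-- Divergence-free condition `∑ᵢ ∂ᵢ uⁱ = 0`. -/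
def IsDivFree (u : V3 → V3) : Prop :=
  ∀ x : V3, ∑ i : Fin 3, pd u i x i = 0

/-- The Laplacian `Δu = ∑ᵢ ∂ᵢ∂ᵢ u`. -/
def lap (u : V3 → V3) (x : V3) : V3 :=
  ∑ i : Fin 3, fderiv ℝ (pd u i) x (Pi.single i 1)

/-- The convection term `(u·∇)v = ∑ᵢ uⁱ ∂ᵢ v`. -/
def conv (u v : V3 → V3) (x : V3) : V3 :=
  ∑ i : Fin 3, u x i • pd v i x

/-- Euclidean inner product on `ℝ³`. -/
def dot (a b : V3) : ℝ := ∑ j : Fin 3, a j * b j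

/-- Squared Euclidean norm on `ℝ³`. -/
def normSq (a : V3) : ℝ := ∑ j : Fin 3, (a j) ^ 2

/-- The periodicity cell `[0,1]³`. -/
def cube : Set V3 := Set.Icc 0 1

/-- `‖u‖²_{L²} = ∫_{[0,1]³} |u|² dx`. -/
def l2sq (u : V3 → V3) : ℝ := ∫ x in cube, normSq (u x)

/-- `|∇u(x)|² = ∑_{i,j} |∂ᵢ uʲ(x)|²`. -/
def gradSq (u : V3 → V3) (x : V3) : ℝ := ∑ i : Fin 3, normSq (pd u i x)

/-- `‖u‖²_{H¹} = ∫_{[0,1]³} (|u|² + |∇u|²) dx`. -/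
def h1sq (u : V3 → V3) : ℝ := ∫ x in cube, (normSq (u x) + gradSq u x)

/-- `‖u‖²_{H²} = ∫_{[0,1]³} |u - Δu|² dx`. -/
def h2sq (u : V3 → V3) : ℝ := ∫ x in cube, normSq (u x - lap u x)

/-- A taming function with `ν = 1`: a smooth `g : ℝ → ℝ` vanishing on `(-∞, N]`,
equal to `r - N` on `[N+1, ∞)`, with derivative between `0` and some `C₀ > 0`. -/
def IsTaming (N : ℝ) (g : ℝ → ℝ) : Prop :=
  ContDiff ℝ (⊤ : ℕ∞) g ∧ (∀ r ≤ N, g r = 0) ∧ (∀ r, N + 1 ≤ r → g r = r - N) ∧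
    ∃ C₀ > 0, ∀ r, 0 ≤ deriv g r ∧ deriv g r ≤ C₀

end

/-! ### Auxiliary lemmas -/

noncomputable section Aux

/-! #### Algebraic lemmas on `dot` and `normSq` -/

theorem dot_comm (a b : V3) : dot a b = dot b a := by
  unfold dot; exact Finset.sum_congr rfl fun j _ => mul_comm _ _

theorem dot_self_eq (a : V3) : dot a a = normSq a := by
  unfold dot normSq; exact Finset.sum_congr rfl fun j _ => (sq (a j)).symm

theorem normSq_nonneg (a : V3) : 0 ≤ normSq a :=
  Finset.sum_nonneg fun j _ => sq_nonneg _

theorem gradSq_nonneg (u : V3 → V3) (x : V3) : 0 ≤ gradSq u x :=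
  Finset.sum_nonneg fun i _ => normSq_nonneg _

theorem dot_sum_left {ι : Type*} (s : Finset ι) (c : ι → V3) (b : V3) :
    dot (∑ i ∈ s, c i) b = ∑ i ∈ s, dot (c i) b := by
  unfold dot
  rw [Finset.sum_comm]
  exact Finset.sum_congr rfl fun j _ => by rw [Finset.sum_apply, Finset.sum_mul]

theorem dot_sum_right {ι : Type*} (s : Finset ι) (b : V3) (c : ι → V3) :
    dot b (∑ i ∈ s, c i) = ∑ i ∈ s, dot b (c i) := by
  rw [dot_comm, dot_sum_left]
  exact Finset.sum_congr rfl fun i _ => dot_comm _ _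

theorem dot_conv_eq (u v : V3 → V3) (x : V3) (b : V3) :
    dot (conv u v x) b = ∑ i : Fin 3, u x i * dot (pd v i x) b := by
  unfold conv
  rw [dot_sum_left]
  exact Finset.sum_congr rfl fun i _ => by
    unfold dot
    rw [Finset.mul_sum]
    exact Finset.sum_congr rfl fun j _ => by simp [mul_assoc]

theorem normSq_sub_expand (a b : V3) :
    normSq (a - b) = normSq a - 2 * dot a b + normSq b := by
  unfold normSq dot
  rw [Finset.mul_sum, ← Finset.sum_sub_distrib, ← Finset.sum_add_distrib]
  exact Finset.sum_congr rfl fun j _ => by simp only [Pi.sub_apply]; ring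

/-- Cauchy–Schwarz: `dot a b ≤ ½|a|² + ½|b|²`. -/
theorem dot_le_half (a b : V3) : dot a b ≤ 1/2 * normSq a + 1/2 * normSq b := by
  have h : 0 ≤ normSq (a - b) := normSq_nonneg _
  have h2 := normSq_sub_expand a b
  nlinarith

/-- `|conv u u|² ≤ |u|²|∇u|²`. -/
theorem normSq_conv_le (u : V3 → V3) (x : V3) :
    normSq (conv u u x) ≤ normSq (u x) * gradSq u x := by
  unfold normSq conv gradSq
  have h : ∀ j : Fin 3, ((∑ i : Fin 3, u x i • pd u i x) j) ^ 2 ≤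
      (∑ i : Fin 3, (u x i) ^ 2) * ∑ i : Fin 3, (pd u i x j) ^ 2 := by
    intro j
    have := Finset.sum_mul_sq_le_sq_mul_sq Finset.univ (fun i => u x i) (fun i => pd u i x j)
    simpa using this
  calc ∑ j : Fin 3, ((∑ i : Fin 3, u x i • pd u i x) j) ^ 2
      ≤ ∑ j : Fin 3, (∑ i : Fin 3, (u x i) ^ 2) * ∑ i : Fin 3, (pd u i x j) ^ 2 :=
        Finset.sum_le_sum fun j _ => h j
    _ = (∑ i : Fin 3, (u x i) ^ 2) * ∑ j : Fin 3, ∑ i : Fin 3, (pd u i x j) ^ 2 := by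
        rw [Finset.mul_sum]
    _ = _ := by
        rw [Finset.sum_comm]
        rfl

theorem dot_expand (A B C D E : V3) (c : ℝ) :
    dot (A - B - c • C) (D - E) =
      dot A D - dot A E - dot B D + dot B E - c * dot C D + c * dot C E := by
  unfold dot
  rw [Finset.mul_sum, Finset.mul_sum, ← Finset.sum_sub_distrib, ← Finset.sum_sub_distrib,
    ← Finset.sum_add_distrib, ← Finset.sum_sub_distrib, ← Finset.sum_add_distrib]
  exact Finset.sum_congr rfl fun j _ => by
    simp only [Pi.sub_apply, Pi.smul_apply, smul_eq_mul]; ring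


/-! #### Smoothness -/

theorem smooth_diff {E F : Type*} [NormedAddCommGroup E] [NormedSpace ℝ E]
    [NormedAddCommGroup F] [NormedSpace ℝ F] {f : E → F}
    (hf : ContDiff ℝ (⊤ : ℕ∞) f) : Differentiable ℝ f :=
  hf.differentiable (by norm_num)

theorem smooth_fderiv_apply {E : Type*} [NormedAddCommGroup E] [NormedSpace ℝ E]
    {f : V3 → E} (hf : ContDiff ℝ (⊤ : ℕ∞) f) (v : V3) :
    ContDiff ℝ (⊤ : ℕ∞) (fun x => fderiv ℝ f x v) :=
  (hf.fderiv_right (m := (⊤ : ℕ∞)) (by norm_num)).clm_apply contDiff_const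

theorem smooth_pd {u : V3 → V3} (hu : ContDiff ℝ (⊤ : ℕ∞) u) (i : Fin 3) :
    ContDiff ℝ (⊤ : ℕ∞) (pd u i) := smooth_fderiv_apply hu _

theorem smooth_comp_j {u : V3 → V3} (hu : ContDiff ℝ (⊤ : ℕ∞) u) (j : Fin 3) :
    ContDiff ℝ (⊤ : ℕ∞) (fun x => u x j) := contDiff_pi.mp hu j

theorem smooth_dot {a b : V3 → V3} (ha : ContDiff ℝ (⊤ : ℕ∞) a)
    (hb : ContDiff ℝ (⊤ : ℕ∞) b) :
    ContDiff ℝ (⊤ : ℕ∞) (fun x => dot (a x) (b x)) := by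
  unfold dot
  exact ContDiff.sum fun j _ => (smooth_comp_j ha j).mul (smooth_comp_j hb j)

theorem smooth_lap {u : V3 → V3} (hu : ContDiff ℝ (⊤ : ℕ∞) u) :
    ContDiff ℝ (⊤ : ℕ∞) (lap u) := by
  unfold lap
  exact ContDiff.sum fun i _ => smooth_fderiv_apply (smooth_pd hu i) _

theorem smooth_conv {u : V3 → V3} (hu : ContDiff ℝ (⊤ : ℕ∞) u) :
    ContDiff ℝ (⊤ : ℕ∞) (conv u u) := by
  unfold conv
  exact ContDiff.sum fun i _ => (smooth_comp_j hu i).smul (smooth_pd hu i)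

theorem smooth_normSq_comp {a : V3 → V3} (ha : ContDiff ℝ (⊤ : ℕ∞) a) :
    ContDiff ℝ (⊤ : ℕ∞) (fun x => normSq (a x)) := by
  have : (fun x => normSq (a x)) = fun x => dot (a x) (a x) := by
    funext x; rw [dot_self_eq]
  rw [this]; exact smooth_dot ha ha

theorem smooth_gradSq {u : V3 → V3} (hu : ContDiff ℝ (⊤ : ℕ∞) u) :
    ContDiff ℝ (⊤ : ℕ∞) (gradSq u) := by
  unfold gradSq
  exact ContDiff.sum fun i _ => smooth_normSq_comp (smooth_pd hu i)

/-! #### Periodicity -/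

theorem periodic_single {E : Type*} {u : V3 → E}
    (hu : ∀ (x : V3) (k : Fin 3 → ℤ), u (x + fun i => (k i : ℝ)) = u x)
    (x : V3) (i : Fin 3) : u (x + Pi.single i 1) = u x := by
  have h : (Pi.single i (1 : ℝ) : V3) = fun j => (((Pi.single i 1 : Fin 3 → ℤ) j : ℤ) : ℝ) := by
    funext j
    by_cases h : j = i
    · subst h; simp
    · simp [Pi.single_eq_of_ne h]
  rw [h]; exact hu x _

theorem fderiv_translate {E : Type*} [NormedAddCommGroup E] [NormedSpace ℝ E]
    {f : V3 → E} (hf : Differentiable ℝ f) {c : V3} (hfc : ∀ y, f (y + c) = f y)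
    (x : V3) : fderiv ℝ f (x + c) = fderiv ℝ f x := by
  have h1 : HasFDerivAt (fun y => f (y + c)) (fderiv ℝ f (x + c)) x := by
    have := (hf (x + c)).hasFDerivAt.comp x ((hasFDerivAt_id x).add_const c)
    exact this
  have h2 : (fun y => f (y + c)) = f := funext hfc
  rw [h2] at h1
  exact h1.fderiv.symm

theorem pd_periodic {u : V3 → V3} (hu : ContDiff ℝ (⊤ : ℕ∞) u) (hper : IsPeriodic u)
    (i j : Fin 3) (x : V3) : pd u i (x + Pi.single j 1) = pd u i x := by
  unfold pd
  rw [fderiv_translate (smooth_diff hu) (fun y => periodic_single hper y j) x]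

/-! #### The divergence theorem on the torus -/

theorem insertNth_one_eq (i : Fin 3) (x : Fin 2 → ℝ) :
    (Fin.insertNth i (1:ℝ) x : V3) = (Fin.insertNth i (0:ℝ) x : V3) + Pi.single i 1 := by
  funext j
  refine Fin.succAboveCases i ?_ ?_ j <;>
    simp [Pi.single_eq_of_ne (Fin.succAbove_ne i _)]

/-- The integral over the unit cube of a divergence of a smooth periodic family vanishes. -/
theorem integral_div_zero (s : Fin 3 → V3 → ℝ)
    (hs : ∀ i, ContDiff ℝ (⊤ : ℕ∞) (s i))
    (hper : ∀ i x, s i (x + Pi.single i 1) = s i x) :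
    (∫ x in cube, ∑ i : Fin 3, fderiv ℝ (s i) x (Pi.single i 1)) = 0 := by
  have key := integral_divergence_of_hasFDerivAt_off_countable'
    (a := (0 : Fin 3 → ℝ)) (b := (1 : Fin 3 → ℝ)) (zero_le_one)
    s (fun i x => fderiv ℝ (s i) x) ∅ Set.countable_empty
    (fun i => ((hs i).continuous).continuousOn)
    (fun x _ i => (smooth_diff (hs i) x).hasFDerivAt)
    (by
      apply Continuous.integrableOn_Icc
      exact continuous_finset_sum _ fun i _ =>
        (smooth_fderiv_apply (hs i) _).continuous)
  rw [show cube = Set.Icc (0 : Fin 3 → ℝ) 1 from rfl, key]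
  apply Finset.sum_eq_zero
  intro i _
  have h : ∀ x : Fin 2 → ℝ, s i (Fin.insertNth i ((1 : Fin 3 → ℝ) i) x) =
      s i (Fin.insertNth i ((0 : Fin 3 → ℝ) i) x) := by
    intro x
    show s i (Fin.insertNth i (1:ℝ) x) = s i (Fin.insertNth i (0:ℝ) x)
    rw [insertNth_one_eq, hper]
  rw [sub_eq_zero]
  exact setIntegral_congr_fun measurableSet_Icc fun x _ => h x

/-! #### Pointwise derivative computations -/

theorem fderiv_mul_apply {f g : V3 → ℝ} {x : V3} (hf : DifferentiableAt ℝ f x)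
    (hg : DifferentiableAt ℝ g x) (v : V3) :
    fderiv ℝ (fun y => f y * g y) x v = fderiv ℝ f x v * g x + f x * fderiv ℝ g x v := by
  rw [fderiv_fun_mul hf hg]
  simp [ContinuousLinearMap.add_apply, ContinuousLinearMap.smul_apply, smul_eq_mul]
  ring

theorem fderiv_comp_j {f : V3 → V3} {x : V3} (hf : DifferentiableAt ℝ f x) (j : Fin 3) (v : V3) :
    fderiv ℝ (fun y => f y j) x v = fderiv ℝ f x v j := by
  have h := hasFDerivAt_pi'.1 hf.hasFDerivAt j
  rw [h.fderiv]; rfl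

theorem diff_comp_j {f : V3 → V3} {x : V3} (hf : DifferentiableAt ℝ f x) (j : Fin 3) :
    DifferentiableAt ℝ (fun y => f y j) x :=
  (hasFDerivAt_pi'.1 hf.hasFDerivAt j).differentiableAt

theorem fderiv_dot_apply {a b : V3 → V3} {x : V3} (ha : DifferentiableAt ℝ a x)
    (hb : DifferentiableAt ℝ b x) (v : V3) :
    fderiv ℝ (fun y => dot (a y) (b y)) x v =
      dot (fderiv ℝ a x v) (b x) + dot (a x) (fderiv ℝ b x v) := by
  have hda : ∀ j, DifferentiableAt ℝ (fun y => a y j) x := fun j => diff_comp_j ha j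
  have hdb : ∀ j, DifferentiableAt ℝ (fun y => b y j) x := fun j => diff_comp_j hb j
  have h1 : (fun y => dot (a y) (b y)) = fun y => ∑ j : Fin 3, (fun z => a z j * b z j) y := by
    funext y; rfl
  rw [h1, fderiv_fun_sum (A := fun j z => a z j * b z j) fun j _ => (hda j).mul (hdb j)]
  rw [ContinuousLinearMap.sum_apply]
  unfold dot
  rw [← Finset.sum_add_distrib]
  exact Finset.sum_congr rfl fun j _ => by
    rw [fderiv_mul_apply (hda j) (hdb j), fderiv_comp_j ha j, fderiv_comp_j hb j]

theorem fderiv_normSq_apply {u : V3 → V3} {x : V3} (hu : DifferentiableAt ℝ u x) (v : V3) :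
    fderiv ℝ (fun y => normSq (u y)) x v = 2 * dot (u x) (fderiv ℝ u x v) := by
  have h1 : (fun y => normSq (u y)) = fun y => dot (u y) (u y) := by
    funext y; rw [dot_self_eq]
  rw [h1, fderiv_dot_apply hu hu, dot_comm (fderiv ℝ u x v) (u x)]
  ring

theorem fderiv_gcomp_apply {g : ℝ → ℝ} (hg : ContDiff ℝ (⊤ : ℕ∞) g)
    {u : V3 → V3} {x : V3} (hu : ContDiff ℝ (⊤ : ℕ∞) u) (v : V3) :
    fderiv ℝ (fun y => g (normSq (u y))) x v =
      deriv g (normSq (u x)) * (2 * dot (u x) (fderiv ℝ u x v)) := by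
  have hn : DifferentiableAt ℝ (fun y => normSq (u y)) x :=
    (smooth_diff (smooth_normSq_comp hu)) x
  have hgd : DifferentiableAt ℝ g (normSq (u x)) := (smooth_diff hg) _
  have hcomp : (fun y => g (normSq (u y))) = g ∘ fun y => normSq (u y) := rfl
  rw [hcomp, fderiv_comp x hgd hn]
  rw [ContinuousLinearMap.comp_apply]
  rw [← fderiv_normSq_apply ((smooth_diff hu) x) v]
  set w := fderiv ℝ (fun y => normSq (u y)) x v with hw
  have : w = w • (1 : ℝ) := by simp
  rw [this, (fderiv ℝ g (normSq (u x))).map_smul, fderiv_apply_one_eq_deriv]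
  simp [smul_eq_mul]
  ring

/-! #### Integration-by-parts identities -/

theorem cube_measurable : MeasurableSet cube := measurableSet_Icc

theorem integrableOn_of_cont {f : V3 → ℝ} (hf : Continuous f) : IntegrableOn f cube :=
  hf.integrableOn_Icc

/-- `∫ ⟨Δu, u⟩ = -∫ |∇u|²`. -/
theorem int_lap_dot {u : V3 → V3} (hu : ContDiff ℝ (⊤ : ℕ∞) u) (hper : IsPeriodic u) :
    (∫ x in cube, dot (lap u x) (u x)) = - ∫ x in cube, gradSq u x := by
  have hu1 : ∀ (x : V3) (j : Fin 3), u (x + Pi.single j 1) = u x :=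
    fun x j => periodic_single hper x j
  have hp1 := pd_periodic hu hper
  have h0 := integral_div_zero (fun i x => dot (pd u i x) (u x))
    (fun i => smooth_dot (smooth_pd hu i) hu)
    (fun i x => by rw [hu1, hp1])
  have hpt : ∀ x : V3,
      (∑ i : Fin 3, fderiv ℝ (fun y => dot (pd u i y) (u y)) x (Pi.single i 1)) =
        dot (lap u x) (u x) + gradSq u x := by
    intro x
    have heach : ∀ i : Fin 3, fderiv ℝ (fun y => dot (pd u i y) (u y)) x (Pi.single i 1) =
        dot (fderiv ℝ (pd u i) x (Pi.single i 1)) (u x) + dot (pd u i x) (pd u i x) :=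
      fun i => fderiv_dot_apply (smooth_diff (smooth_pd hu i) x) (smooth_diff hu x) _
    rw [Finset.sum_congr rfl fun i _ => heach i, Finset.sum_add_distrib, ← dot_sum_left]
    unfold lap gradSq
    congr 1
    exact Finset.sum_congr rfl fun i _ => dot_self_eq _
  have h1 : (∫ x in cube, (dot (lap u x) (u x) + gradSq u x)) = 0 := by
    rw [← h0]
    exact setIntegral_congr_fun cube_measurable fun x _ => (hpt x).symm
  have hi1 : IntegrableOn (fun x => dot (lap u x) (u x)) cube :=
    integrableOn_of_cont (smooth_dot (smooth_lap hu) hu).continuous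
  have hi2 : IntegrableOn (gradSq u) cube :=
    integrableOn_of_cont (smooth_gradSq hu).continuous
  have h2 := integral_add hi1 hi2
  rw [h1] at h2  -- wrong direction; fix below
  linarith [h2]

/-- `∫ ⟨(u·∇)u, u⟩ = 0`. -/
theorem int_conv_dot {u : V3 → V3} (hu : ContDiff ℝ (⊤ : ℕ∞) u) (hper : IsPeriodic u)
    (hdiv : IsDivFree u) : (∫ x in cube, dot (conv u u x) (u x)) = 0 := by
  have hu1 : ∀ (x : V3) (j : Fin 3), u (x + Pi.single j 1) = u x :=
    fun x j => periodic_single hper x j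
  have h0 := integral_div_zero (fun i x => u x i * normSq (u x))
    (fun i => (smooth_comp_j hu i).mul (smooth_normSq_comp hu))
    (fun i x => by rw [hu1])
  have hpt : ∀ x : V3,
      (∑ i : Fin 3, fderiv ℝ (fun y => u y i * normSq (u y)) x (Pi.single i 1)) =
        2 * dot (conv u u x) (u x) := by
    intro x
    have heach : ∀ i : Fin 3, fderiv ℝ (fun y => u y i * normSq (u y)) x (Pi.single i 1) =
        pd u i x i * normSq (u x) + u x i * (2 * dot (u x) (pd u i x)) := by
      intro i
      rw [fderiv_mul_apply (diff_comp_j (smooth_diff hu x) i)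
        (smooth_diff (smooth_normSq_comp hu) x),
        fderiv_comp_j (smooth_diff hu x) i, fderiv_normSq_apply (smooth_diff hu x)]
      rfl
    rw [Finset.sum_congr rfl fun i _ => heach i, Finset.sum_add_distrib,
      ← Finset.sum_mul, hdiv x, zero_mul, zero_add, dot_conv_eq]
    rw [Finset.mul_sum]
    exact Finset.sum_congr rfl fun i _ => by rw [dot_comm (pd u i x) (u x)]; ring
  have h1 : (∫ x in cube, 2 * dot (conv u u x) (u x)) = 0 := by
    rw [← h0]
    exact setIntegral_congr_fun cube_measurable fun x _ => (hpt x).symm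
  rw [integral_const_mul] at h1
  linarith

/-- `∫ gN(|u|²)⟨u, Δu⟩ = -∫ (2 gN'(|u|²) ∑ᵢ⟨u,∂ᵢu⟩² + gN(|u|²)|∇u|²)`. -/
theorem int_g_lap {gN : ℝ → ℝ} (hgN : ContDiff ℝ (⊤ : ℕ∞) gN)
    {u : V3 → V3} (hu : ContDiff ℝ (⊤ : ℕ∞) u) (hper : IsPeriodic u) :
    (∫ x in cube, gN (normSq (u x)) * dot (u x) (lap u x)) =
      - ∫ x in cube, (2 * deriv gN (normSq (u x)) *
          (∑ i : Fin 3, (dot (u x) (pd u i x)) ^ 2) +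
        gN (normSq (u x)) * gradSq u x) := by
  have hu1 : ∀ (x : V3) (j : Fin 3), u (x + Pi.single j 1) = u x :=
    fun x j => periodic_single hper x j
  have hp1 := pd_periodic hu hper
  have h0 := integral_div_zero (fun i x => gN (normSq (u x)) * dot (u x) (pd u i x))
    (fun i => (hgN.comp (smooth_normSq_comp hu)).mul (smooth_dot hu (smooth_pd hu i)))
    (fun i x => by rw [hu1, hp1])
  have hpt : ∀ x : V3,
      (∑ i : Fin 3, fderiv ℝ (fun y => gN (normSq (u y)) * dot (u y) (pd u i y)) x
          (Pi.single i 1)) =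
        2 * deriv gN (normSq (u x)) * (∑ i : Fin 3, (dot (u x) (pd u i x)) ^ 2) +
          gN (normSq (u x)) * gradSq u x +
          gN (normSq (u x)) * dot (u x) (lap u x) := by
    intro x
    have heach : ∀ i : Fin 3,
        fderiv ℝ (fun y => gN (normSq (u y)) * dot (u y) (pd u i y)) x (Pi.single i 1) =
          2 * deriv gN (normSq (u x)) * (dot (u x) (pd u i x)) ^ 2 +
            (gN (normSq (u x)) * normSq (pd u i x) +
              gN (normSq (u x)) * dot (u x) (fderiv ℝ (pd u i) x (Pi.single i 1))) := by
      intro i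
      rw [fderiv_mul_apply (smooth_diff (f := fun y => gN (normSq (u y)))
        (hgN.comp (smooth_normSq_comp hu)) x)
        (smooth_diff (smooth_dot hu (smooth_pd hu i)) x),
        fderiv_gcomp_apply hgN hu,
        fderiv_dot_apply (smooth_diff hu x) (smooth_diff (smooth_pd hu i) x)]
      show deriv gN (normSq (u x)) * (2 * dot (u x) (pd u i x)) * dot (u x) (pd u i x) +
          gN (normSq (u x)) * (dot (pd u i x) (pd u i x) +
            dot (u x) (fderiv ℝ (pd u i) x (Pi.single i 1))) = _
      rw [dot_self_eq]
      ring
    rw [Finset.sum_congr rfl fun i _ => heach i, Finset.sum_add_distrib,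
      Finset.sum_add_distrib, ← Finset.mul_sum, ← Finset.mul_sum, ← Finset.mul_sum]
    have hlap : dot (u x) (lap u x) =
        ∑ i : Fin 3, dot (u x) (fderiv ℝ (pd u i) x (Pi.single i 1)) := by
      unfold lap; rw [dot_sum_right]
    rw [← hlap]
    unfold gradSq
    ring
  have h1 : (∫ x in cube,
      (2 * deriv gN (normSq (u x)) * (∑ i : Fin 3, (dot (u x) (pd u i x)) ^ 2) +
        gN (normSq (u x)) * gradSq u x +
        gN (normSq (u x)) * dot (u x) (lap u x))) = 0 := by
    rw [← h0]
    exact setIntegral_congr_fun cube_measurable fun x _ => (hpt x).symm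
  have hderiv_cont : Continuous (deriv gN) := hgN.continuous_deriv (by norm_num)
  have hi1 : IntegrableOn (fun x => 2 * deriv gN (normSq (u x)) *
      (∑ i : Fin 3, (dot (u x) (pd u i x)) ^ 2) + gN (normSq (u x)) * gradSq u x) cube := by
    apply integrableOn_of_cont
    apply Continuous.add
    · exact ((continuous_const.mul (hderiv_cont.comp
        (smooth_normSq_comp hu).continuous)).mul
        (continuous_finset_sum _ fun i _ =>
          ((smooth_dot hu (smooth_pd hu i)).continuous).pow 2))
    · exact ((hgN.comp (smooth_normSq_comp hu)).continuous).mul (smooth_gradSq hu).continuous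
  have hi2 : IntegrableOn (fun x => gN (normSq (u x)) * dot (u x) (lap u x)) cube :=
    integrableOn_of_cont (((hgN.comp (smooth_normSq_comp hu)).continuous).mul
      (smooth_dot hu (smooth_lap hu)).continuous)
  have h2 := integral_add hi1 hi2
  rw [show (fun x => 2 * deriv gN (normSq (u x)) *
      (∑ i : Fin 3, (dot (u x) (pd u i x)) ^ 2) + gN (normSq (u x)) * gradSq u x +
      gN (normSq (u x)) * dot (u x) (lap u x)) = (fun x => (2 * deriv gN (normSq (u x)) *
      (∑ i : Fin 3, (dot (u x) (pd u i x)) ^ 2) + gN (normSq (u x)) * gradSq u x) +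
      (fun x => gN (normSq (u x)) * dot (u x) (lap u x)) x) from rfl] at h1
  rw [h2] at h1
  linarith

/-! #### Properties of the taming function -/

theorem taming_nonneg {N : ℝ} {g : ℝ → ℝ} (hg : IsTaming N g) : ∀ r, 0 ≤ g r := by
  obtain ⟨hsm, h0, h1, C₀, hC₀, hd⟩ := hg
  intro r
  rcases le_or_gt r N with h | h
  · rw [h0 r h]
  · have hmono : Monotone g :=
      monotone_of_deriv_nonneg (smooth_diff hsm) fun s => (hd s).1
    have := hmono h.le
    rwa [h0 N le_rfl] at this

theorem taming_lb {N : ℝ} {g : ℝ → ℝ} (hg : IsTaming N g) : ∀ r, r - (N + 1) ≤ g r := by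
  intro r
  rcases le_or_gt r (N + 1) with h | h
  · linarith [taming_nonneg hg r]
  · rw [hg.2.2.1 r h.le]; linarith

end Aux

/-- `H¹`-energy estimate for the tamed Navier–Stokes drift `F(u) = Δu - (u·∇)u - g_N(|u|²)u`:
`⟨F(u), u⟩_{H¹} ≤ -½‖u‖²_{H²} - ½‖|u|·|∇u|‖²_{L²} + C_N‖∇u‖²_{L²} + ‖u‖²_{L²}`. -/
theorem tamed_drift_H1_energy_estimate (N : ℝ) (gN : ℝ → ℝ) (hg : IsTaming N gN) :
    ∃ C_N : ℝ, 0 ≤ C_N ∧ ∀ u : V3 → V3, ContDiff ℝ (⊤ : ℕ∞) u → IsPeriodic u → IsDivFree u →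
      (∫ x in cube,
          dot (lap u x - conv u u x - gN (normSq (u x)) • u x) (u x - lap u x)) ≤
        -(1/2) * h2sq u - (1/2) * (∫ x in cube, normSq (u x) * gradSq u x) +
          C_N * (∫ x in cube, gradSq u x) + l2sq u := by
  obtain ⟨hgN, hg0, hg1, C₀, hC₀, hgd⟩ := hg
  refine ⟨max 0 (N + 1), le_max_left _ _, ?_⟩
  intro u hu hper hdiv
  set C : ℝ := max 0 (N + 1) with hC
  -- abbreviations
  set G : ℝ := ∫ x in cube, gradSq u x with hGdef
  set W : ℝ := ∫ x in cube, normSq (u x) * gradSq u x with hWdef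
  set D : ℝ := ∫ x in cube, normSq (lap u x) with hDdef
  -- continuity facts
  have cu := hu.continuous
  have clap := (smooth_lap hu).continuous
  have cconv := (smooth_conv hu).continuous
  have cnq := (smooth_normSq_comp hu).continuous
  have cg : Continuous (fun x => gN (normSq (u x))) := hgN.continuous.comp cnq
  have cgrad := (smooth_gradSq hu).continuous
  -- integrability of the six pieces
  have hI1 : IntegrableOn (fun x => dot (lap u x) (u x)) cube :=
    integrableOn_of_cont (smooth_dot (smooth_lap hu) hu).continuous
  have hI2 : IntegrableOn (fun x => dot (lap u x) (lap u x)) cube :=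
    integrableOn_of_cont (smooth_dot (smooth_lap hu) (smooth_lap hu)).continuous
  have hI3 : IntegrableOn (fun x => dot (conv u u x) (u x)) cube :=
    integrableOn_of_cont (smooth_dot (smooth_conv hu) hu).continuous
  have hI4 : IntegrableOn (fun x => dot (conv u u x) (lap u x)) cube :=
    integrableOn_of_cont (smooth_dot (smooth_conv hu) (smooth_lap hu)).continuous
  have hI5 : IntegrableOn (fun x => gN (normSq (u x)) * dot (u x) (u x)) cube :=
    integrableOn_of_cont (cg.mul (smooth_dot hu hu).continuous)
  have hI6 : IntegrableOn (fun x => gN (normSq (u x)) * dot (u x) (lap u x)) cube :=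
    integrableOn_of_cont (cg.mul (smooth_dot hu (smooth_lap hu)).continuous)
  have hInq : IntegrableOn (fun x => normSq (u x)) cube := integrableOn_of_cont cnq
  have hIgr : IntegrableOn (gradSq u) cube := integrableOn_of_cont cgrad
  have hIngr : IntegrableOn (fun x => normSq (u x) * gradSq u x) cube :=
    integrableOn_of_cont (cnq.mul cgrad)
  have hIul : IntegrableOn (fun x => dot (u x) (lap u x)) cube :=
    integrableOn_of_cont (smooth_dot hu (smooth_lap hu)).continuous
  -- nonnegativity facts
  have hG0 : 0 ≤ G := setIntegral_nonneg cube_measurable fun x _ => gradSq_nonneg u x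
  have hL0 : 0 ≤ l2sq u :=
    setIntegral_nonneg cube_measurable fun x _ => normSq_nonneg (u x)
  -- split the integral into six pieces
  have hsplit : (∫ x in cube,
      dot (lap u x - conv u u x - gN (normSq (u x)) • u x) (u x - lap u x)) =
      (∫ x in cube, dot (lap u x) (u x)) - (∫ x in cube, dot (lap u x) (lap u x)) -
        (∫ x in cube, dot (conv u u x) (u x)) + (∫ x in cube, dot (conv u u x) (lap u x)) -
        (∫ x in cube, gN (normSq (u x)) * dot (u x) (u x)) +
        (∫ x in cube, gN (normSq (u x)) * dot (u x) (lap u x)) := by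
    rw [setIntegral_congr_fun cube_measurable (g := fun x =>
        dot (lap u x) (u x) - dot (lap u x) (lap u x) - dot (conv u u x) (u x) +
          dot (conv u u x) (lap u x) - gN (normSq (u x)) * dot (u x) (u x) +
          gN (normSq (u x)) * dot (u x) (lap u x))
      (fun x _ => dot_expand _ _ _ _ _ _)]
    have hA1 : IntegrableOn (fun x => dot (lap u x) (u x) - dot (lap u x) (lap u x))
        cube := hI1.sub hI2
    have hA2 : IntegrableOn (fun x => dot (lap u x) (u x) - dot (lap u x) (lap u x) -
        dot (conv u u x) (u x)) cube := hA1.sub hI3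
    have hA3 : IntegrableOn (fun x => dot (lap u x) (u x) - dot (lap u x) (lap u x) -
        dot (conv u u x) (u x) + dot (conv u u x) (lap u x)) cube := hA2.add hI4
    have hA4 : IntegrableOn (fun x => dot (lap u x) (u x) - dot (lap u x) (lap u x) -
        dot (conv u u x) (u x) + dot (conv u u x) (lap u x) -
        gN (normSq (u x)) * dot (u x) (u x)) cube := hA3.sub hI5
    rw [integral_add hA4 hI6, integral_sub hA3 hI5, integral_add hA2 hI4,
      integral_sub hA1 hI3, integral_sub hI1 hI2]
  -- identity 1 : ∫⟨Δu,u⟩ = -G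
  have h1 : (∫ x in cube, dot (lap u x) (u x)) = -G := int_lap_dot hu hper
  -- identity 2 : ∫⟨Δu,Δu⟩ = D
  have h2 : (∫ x in cube, dot (lap u x) (lap u x)) = D :=
    setIntegral_congr_fun cube_measurable fun x _ => dot_self_eq _
  -- identity 3
  have h3 : (∫ x in cube, dot (conv u u x) (u x)) = 0 := int_conv_dot hu hper hdiv
  -- bound 4 : ∫⟨(u·∇)u,Δu⟩ ≤ ½W + ½D
  have h4 : (∫ x in cube, dot (conv u u x) (lap u x)) ≤ 1/2 * W + 1/2 * D := by
    have hpt : ∀ x ∈ cube, dot (conv u u x) (lap u x) ≤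
        1/2 * (normSq (u x) * gradSq u x) + 1/2 * normSq (lap u x) := by
      intro x _
      calc dot (conv u u x) (lap u x)
          ≤ 1/2 * normSq (conv u u x) + 1/2 * normSq (lap u x) := dot_le_half _ _
        _ ≤ 1/2 * (normSq (u x) * gradSq u x) + 1/2 * normSq (lap u x) := by
            have := normSq_conv_le u x; linarith
    have hIrhs : IntegrableOn (fun x => 1/2 * (normSq (u x) * gradSq u x) +
        1/2 * normSq (lap u x)) cube := by
      apply integrableOn_of_cont
      exact (continuous_const.mul (cnq.mul cgrad)).add
        (continuous_const.mul (smooth_normSq_comp (smooth_lap hu)).continuous)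
    calc (∫ x in cube, dot (conv u u x) (lap u x))
        ≤ ∫ x in cube, (1/2 * (normSq (u x) * gradSq u x) + 1/2 * normSq (lap u x)) :=
          setIntegral_mono_on hI4 hIrhs cube_measurable hpt
      _ = 1/2 * W + 1/2 * D := by
          rw [integral_add (f := fun x => 1/2 * (normSq (u x) * gradSq u x))
              (g := fun x => 1/2 * normSq (lap u x)) (integrableOn_of_cont (continuous_const.mul (cnq.mul cgrad)))
            (integrableOn_of_cont (continuous_const.mul
              (smooth_normSq_comp (smooth_lap hu)).continuous)),
            integral_const_mul, integral_const_mul]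
  -- bound 5 : 0 ≤ ∫ gN(|u|²)⟨u,u⟩
  have h5 : 0 ≤ (∫ x in cube, gN (normSq (u x)) * dot (u x) (u x)) := by
    apply setIntegral_nonneg cube_measurable
    intro x _
    have := taming_nonneg ⟨hgN, hg0, hg1, C₀, hC₀, hgd⟩ (normSq (u x))
    have h := normSq_nonneg (u x)
    rw [dot_self_eq]
    positivity
  -- bound 6 : ∫ gN(|u|²)⟨u,Δu⟩ ≤ (N+1)G - W
  have h6 : (∫ x in cube, gN (normSq (u x)) * dot (u x) (lap u x)) ≤ (N + 1) * G - W := by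
    have hkey := int_g_lap hgN hu hper
    have cderiv : Continuous (deriv gN) := hgN.continuous_deriv (by norm_num)
    have csum : Continuous (fun x => ∑ i : Fin 3, (dot (u x) (pd u i x)) ^ 2) :=
      continuous_finset_sum _ fun i _ =>
        ((smooth_dot hu (smooth_pd hu i)).continuous).pow 2
    have hIfull : IntegrableOn (fun x => 2 * deriv gN (normSq (u x)) *
        (∑ i : Fin 3, (dot (u x) (pd u i x)) ^ 2) + gN (normSq (u x)) * gradSq u x) cube :=
      integrableOn_of_cont (((continuous_const.mul (cderiv.comp cnq)).mul csum).add
        (cg.mul cgrad))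
    have hIg : IntegrableOn (fun x => gN (normSq (u x)) * gradSq u x) cube :=
      integrableOn_of_cont (cg.mul cgrad)
    have hIlb : IntegrableOn (fun x => (normSq (u x) - (N + 1)) * gradSq u x) cube :=
      integrableOn_of_cont ((cnq.sub continuous_const).mul cgrad)
    have step1 : (∫ x in cube, gN (normSq (u x)) * gradSq u x) ≤
        ∫ x in cube, (2 * deriv gN (normSq (u x)) *
          (∑ i : Fin 3, (dot (u x) (pd u i x)) ^ 2) + gN (normSq (u x)) * gradSq u x) := by
      apply setIntegral_mono_on hIg hIfull cube_measurable
      intro x _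
      have hd := (hgd (normSq (u x))).1
      have hs : (0:ℝ) ≤ ∑ i : Fin 3, (dot (u x) (pd u i x)) ^ 2 :=
        Finset.sum_nonneg fun i _ => sq_nonneg _
      nlinarith
    have step2 : (∫ x in cube, (normSq (u x) - (N + 1)) * gradSq u x) ≤
        ∫ x in cube, gN (normSq (u x)) * gradSq u x := by
      apply setIntegral_mono_on hIlb hIg cube_measurable
      intro x _
      have := taming_lb ⟨hgN, hg0, hg1, C₀, hC₀, hgd⟩ (normSq (u x))
      have hgr := gradSq_nonneg u x
      nlinarith
    have step3 : (∫ x in cube, (normSq (u x) - (N + 1)) * gradSq u x) = W - (N + 1) * G := by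
      have : (fun x => (normSq (u x) - (N + 1)) * gradSq u x) =
          fun x => normSq (u x) * gradSq u x - (N + 1) * gradSq u x := by
        funext x; ring
      rw [this, integral_sub (g := fun x => (N + 1) * gradSq u x) hIngr (integrableOn_of_cont (continuous_const.mul cgrad)),
        integral_const_mul]
    linarith
  -- expansion of h2sq
  have hh2 : h2sq u = l2sq u + 2 * G + D := by
    unfold h2sq
    have hpt : ∀ x ∈ cube, normSq (u x - lap u x) =
        normSq (u x) - 2 * dot (u x) (lap u x) + normSq (lap u x) :=
      fun x _ => normSq_sub_expand _ _
    rw [setIntegral_congr_fun cube_measurable hpt]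
    have hIdl : IntegrableOn (fun x => 2 * dot (u x) (lap u x)) cube :=
      integrableOn_of_cont (continuous_const.mul (smooth_dot hu (smooth_lap hu)).continuous)
    have hInl : IntegrableOn (fun x => normSq (lap u x)) cube :=
      integrableOn_of_cont (smooth_normSq_comp (smooth_lap hu)).continuous
    have hB : IntegrableOn (fun x => normSq (u x) - 2 * dot (u x) (lap u x)) cube :=
      hInq.sub hIdl
    rw [integral_add hB hInl, integral_sub hInq hIdl, integral_const_mul]
    have hul : (∫ x in cube, dot (u x) (lap u x)) = -G := by
      rw [setIntegral_congr_fun cube_measurable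
        (g := fun x => dot (lap u x) (u x)) (fun x _ => dot_comm _ _)]
      exact int_lap_dot hu hper
    rw [hul]
    unfold l2sq
    ring
  -- final arithmetic
  have hCN : N + 1 ≤ C := le_max_right _ _
  have hmul : (N + 1) * G ≤ C * G := mul_le_mul_of_nonneg_right hCN hG0
  rw [hsplit, h1, h2, h3, hh2]
  linarith
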